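/- For any labelled Markov chain (X,L,τ,l), any natural number i, and any states x,y ∈ X, the judgment x ⊢_{Γ^i(⊥)(x,y)} y is derivable in the derivation system (in particular Γ^i(⊥)(x,y) is rational). -/

import Mathlib

/-- A finitely supported, rational-valued probability distribution on `X`. -/
structure FinDist (X : Type*) where
  p : X → ℝ
  nonneg : ∀ x, 0 ≤ p x
  rat : ∀ x, ∃ q : ℚ, (q : ℝ) = p x
  supp : Finset X
  mem_supp : ∀ x, x ∈ supp ↔ p x ≠ 0
  sum_one : ∑ x ∈ supp, p x = 1

/-- A labelled Markov chain with states `X` and labels `L`. -/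
structure LMC (X : Type*) (L : Type*) where
  τ : X → FinDist X
  label : X → L

/-- Expectation `μ ⊨ h = ∑ x, μ(x)·h(x)`. -/
noncomputable def expv {X : Type*} (μ : FinDist X) (h : X → ℝ) : ℝ :=
  ∑ z ∈ μ.supp, μ.p z * h z

/-- A `[0,1]`-valued pseudometric on `X`. -/
structure PMet (X : Type*) where
  d : X → X → ℝ
  nonneg : ∀ x y, 0 ≤ d x y
  le_one : ∀ x y, d x y ≤ 1
  refl : ∀ x, d x x = 0
  symm : ∀ x y, d x y = d y x
  triangle : ∀ x y z, d x z ≤ d x y + d y z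

open Classical in
/-- The functional `Γ` (on underlying distance functions). -/
noncomputable def GammaFun {X L : Type*} (M : LMC X L) (d : X → X → ℝ) : X → X → ℝ :=
  fun x y =>
    if M.label x ≠ M.label y then 1
    else sSup { r : ℝ | ∃ h : X → ℝ, (∀ z, h z ∈ Set.Icc (0:ℝ) 1) ∧
      (∀ u v, |h u - h v| ≤ d u v) ∧ r = expv (M.τ x) h - expv (M.τ y) h }

/-- The derivation system for lower bounds on behavioural distances. -/
inductive Deriv {X L : Type*} [DecidableEq X] (M : LMC X L) : X → ℚ → X → Prop where
  | zero (x y : X) : Deriv M x 0 y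
  | lab (x y : X) : M.label x ≠ M.label y → Deriv M x 1 y
  | symm {x y : X} {ε : ℚ} : Deriv M y ε x → Deriv M x ε y
  | weak {x y : X} {ε ε' : ℚ} : Deriv M x ε' y → 0 ≤ ε → ε ≤ ε' → Deriv M x ε y
  | exp {x y : X} {ε : ℚ} (h : X → ℚ) :
      0 ≤ ε →
      (∀ z ∈ (M.τ x).supp ∪ (M.τ y).supp, 0 ≤ h z ∧ h z ≤ 1) →
      (∀ x' ∈ (M.τ x).supp ∪ (M.τ y).supp, ∀ y' ∈ (M.τ x).supp ∪ (M.τ y).supp,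
        h y' < h x' → Deriv M x' (h x' - h y') y') →
      (ε : ℝ) ≤ expv (M.τ x) (fun z => ((h z : ℚ) : ℝ))
              - expv (M.τ y) (fun z => ((h z : ℚ) : ℝ)) →
      Deriv M x ε y


-- helpers
namespace Aux

lemma supp_nonempty {X : Type*} (μ : FinDist X) : μ.supp.Nonempty := by
  by_contra h
  rw [Finset.not_nonempty_iff_eq_empty] at h
  have := μ.sum_one
  rw [h] at this
  simp at this

lemma expv_congr {X : Type*} (μ : FinDist X) {h g : X → ℝ}
    (H : ∀ z ∈ μ.supp, h z = g z) : expv μ h = expv μ g := by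
  unfold expv
  exact Finset.sum_congr rfl fun z hz => by rw [H z hz]

lemma expv_eq_sum {X : Type*} [DecidableEq X] (μ : FinDist X) (S : Finset X)
    (hsub : μ.supp ⊆ S) (h : X → ℝ) : expv μ h = ∑ z ∈ S, μ.p z * h z := by
  unfold expv
  refine Finset.sum_subset hsub fun z hz hnz => ?_
  have : μ.p z = 0 := by
    by_contra hp
    exact hnz ((μ.mem_supp z).2 hp)
  simp [this]

lemma expv_zero {X : Type*} (μ : FinDist X) : expv μ (fun _ => (0:ℝ)) = 0 := by
  simp [expv]

lemma expv_nonneg {X : Type*} (μ : FinDist X) {h : X → ℝ} (h0 : ∀ z, 0 ≤ h z) :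
    0 ≤ expv μ h :=
  Finset.sum_nonneg fun z _ => mul_nonneg (μ.nonneg z) (h0 z)

lemma expv_le_one {X : Type*} (μ : FinDist X) {h : X → ℝ} (h1 : ∀ z, h z ≤ 1) :
    expv μ h ≤ 1 := by
  calc expv μ h ≤ ∑ z ∈ μ.supp, μ.p z * 1 :=
        Finset.sum_le_sum fun z _ => mul_le_mul_of_nonneg_left (h1 z) (μ.nonneg z)
    _ = 1 := by simp [μ.sum_one]

lemma expv_one_sub {X : Type*} (μ : FinDist X) (h : X → ℝ) :
    expv μ (fun z => 1 - h z) = 1 - expv μ h := by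
  unfold expv
  have : ∑ z ∈ μ.supp, μ.p z * (1 - h z) = ∑ z ∈ μ.supp, (μ.p z - μ.p z * h z) :=
    Finset.sum_congr rfl fun z _ => by ring
  rw [this, Finset.sum_sub_distrib, μ.sum_one]

end Aux


namespace Aux

variable {X L : Type*}

def gset (M : LMC X L) (d : X → X → ℝ) (x y : X) : Set ℝ :=
  { r : ℝ | ∃ h : X → ℝ, (∀ z, h z ∈ Set.Icc (0:ℝ) 1) ∧
      (∀ u v, |h u - h v| ≤ d u v) ∧ r = expv (M.τ x) h - expv (M.τ y) h }

open Classical in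
lemma gammaFun_def (M : LMC X L) (d : X → X → ℝ) (x y : X) :
    GammaFun M d x y = if M.label x ≠ M.label y then 1 else sSup (gset M d x y) := rfl

lemma zero_mem_gset (M : LMC X L) {d : X → X → ℝ} (dnn : ∀ u v, 0 ≤ d u v) (x y : X) :
    (0:ℝ) ∈ gset M d x y := by
  refine ⟨fun _ => 0, fun z => ⟨le_refl _, zero_le_one⟩, fun u v => by simpa using dnn u v, ?_⟩
  simp [expv_zero]

lemma gset_le_one (M : LMC X L) (d : X → X → ℝ) (x y : X) :
    ∀ r ∈ gset M d x y, r ≤ 1 := by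
  rintro r ⟨h, hbox, _, rfl⟩
  have h1 : expv (M.τ x) h ≤ 1 := expv_le_one _ fun z => (hbox z).2
  have h2 : 0 ≤ expv (M.τ y) h := expv_nonneg _ fun z => (hbox z).1
  linarith

lemma gset_bddAbove (M : LMC X L) (d : X → X → ℝ) (x y : X) :
    BddAbove (gset M d x y) := ⟨1, gset_le_one M d x y⟩

lemma sSup_gset_nonneg (M : LMC X L) {d : X → X → ℝ} (dnn : ∀ u v, 0 ≤ d u v) (x y : X) :
    0 ≤ sSup (gset M d x y) :=
  le_csSup (gset_bddAbove M d x y) (zero_mem_gset M dnn x y)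

lemma sSup_gset_le_one (M : LMC X L) {d : X → X → ℝ} (dnn : ∀ u v, 0 ≤ d u v) (x y : X) :
    sSup (gset M d x y) ≤ 1 :=
  csSup_le ⟨0, zero_mem_gset M dnn x y⟩ (gset_le_one M d x y)

/-- Bundle of pseudometric properties. -/
def GoodD (d : X → X → ℝ) : Prop :=
  (∀ x y, 0 ≤ d x y) ∧ (∀ x y, d x y ≤ 1) ∧ (∀ x, d x x = 0) ∧
  (∀ x y, d x y = d y x) ∧ (∀ x y z, d x z ≤ d x y + d y z)

lemma gammaFun_nonneg (M : LMC X L) {d : X → X → ℝ} (dnn : ∀ u v, 0 ≤ d u v) (x y : X) :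
    0 ≤ GammaFun M d x y := by
  rw [gammaFun_def]
  split
  · exact zero_le_one
  · exact sSup_gset_nonneg M dnn x y

lemma gammaFun_le_one (M : LMC X L) {d : X → X → ℝ} (dnn : ∀ u v, 0 ≤ d u v) (x y : X) :
    GammaFun M d x y ≤ 1 := by
  rw [gammaFun_def]
  split
  · exact le_refl _
  · exact sSup_gset_le_one M dnn x y

lemma gammaFun_refl (M : LMC X L) {d : X → X → ℝ} (dnn : ∀ u v, 0 ≤ d u v) (x : X) :
    GammaFun M d x x = 0 := by
  rw [gammaFun_def]
  rw [if_neg (by simp)]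
  have : gset M d x x = {0} := by
    ext r
    constructor
    · rintro ⟨h, _, _, rfl⟩; simp
    · rintro hr
      simp only [Set.mem_singleton_iff] at hr
      exact hr ▸ zero_mem_gset M dnn x x
  rw [this, csSup_singleton]

lemma gset_symm (M : LMC X L) (d : X → X → ℝ) (x y : X) :
    gset M d x y = gset M d y x := by
  have key : ∀ a b : X, gset M d a b ⊆ gset M d b a := by
    rintro a b r ⟨h, hbox, hlip, rfl⟩
    refine ⟨fun z => 1 - h z,
      fun z => ⟨by show (0:ℝ) ≤ 1 - h z; linarith [(hbox z).2],
                by show (1:ℝ) - h z ≤ 1; linarith [(hbox z).1]⟩,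
      fun u v => by simpa [abs_sub_comm, sub_sub_sub_cancel_left] using hlip u v, ?_⟩
    rw [expv_one_sub, expv_one_sub]
    ring
  exact le_antisymm (key x y) (key y x)

lemma gammaFun_symm (M : LMC X L) (d : X → X → ℝ) (x y : X) :
    GammaFun M d x y = GammaFun M d y x := by
  rw [gammaFun_def, gammaFun_def, gset_symm]
  by_cases h : M.label x = M.label y
  · rw [if_neg (by simp [h]), if_neg (by simp [h.symm])]
  · rw [if_pos h, if_pos (Ne.symm h)]

lemma gammaFun_triangle (M : LMC X L) {d : X → X → ℝ} (dnn : ∀ u v, 0 ≤ d u v) (x y z : X) :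
    GammaFun M d x z ≤ GammaFun M d x y + GammaFun M d y z := by
  by_cases hxy : M.label x = M.label y
  · by_cases hyz : M.label y = M.label z
    · have hxz : M.label x = M.label z := hxy.trans hyz
      rw [gammaFun_def, gammaFun_def, gammaFun_def,
        if_neg (by simp [hxy, hyz, hxz]), if_neg (by simp [hxy, hyz, hxz]), if_neg (by simp [hxy, hyz, hxz])]
      refine csSup_le ⟨0, zero_mem_gset M dnn x z⟩ ?_
      rintro r ⟨h, hbox, hlip, rfl⟩
      have h1 : expv (M.τ x) h - expv (M.τ y) h ≤ sSup (gset M d x y) :=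
        le_csSup (gset_bddAbove M d x y) ⟨h, hbox, hlip, rfl⟩
      have h2 : expv (M.τ y) h - expv (M.τ z) h ≤ sSup (gset M d y z) :=
        le_csSup (gset_bddAbove M d y z) ⟨h, hbox, hlip, rfl⟩
      linarith
    · have h1 : GammaFun M d x z ≤ 1 := gammaFun_le_one M dnn x z
      have h2 : GammaFun M d y z = 1 := by rw [gammaFun_def, if_pos hyz]
      have h3 : 0 ≤ GammaFun M d x y := gammaFun_nonneg M dnn x y
      linarith
  · have h1 : GammaFun M d x z ≤ 1 := gammaFun_le_one M dnn x z
    have h2 : GammaFun M d x y = 1 := by rw [gammaFun_def, if_pos hxy]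
    have h3 : 0 ≤ GammaFun M d y z := gammaFun_nonneg M dnn y z
    linarith

lemma goodD_iterate (M : LMC X L) (i : ℕ) :
    GoodD ((GammaFun M)^[i] (fun _ _ => 0)) := by
  induction i with
  | zero =>
    refine ⟨fun _ _ => le_refl _, fun _ _ => zero_le_one, fun _ => rfl, fun _ _ => rfl,
      fun _ _ _ => by simp⟩
  | succ n ih =>
    rw [Function.iterate_succ_apply']
    obtain ⟨dnn, _, _, _, _⟩ := ih
    exact ⟨fun a b => gammaFun_nonneg M dnn a b, fun a b => gammaFun_le_one M dnn a b,
      fun a => gammaFun_refl M dnn a, fun a b => gammaFun_symm M _ a b,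
      fun a b c => gammaFun_triangle M dnn a b c⟩

end Aux

namespace Aux

variable {X : Type*}

/-- McShane-type extension of a function satisfying constraints on `S` to all of `X`. -/
lemma mcshane (S : Finset X) (hS : S.Nonempty) {d : X → X → ℝ} (good : GoodD d)
    (h : X → ℝ) (box : ∀ s ∈ S, 0 ≤ h s ∧ h s ≤ 1)
    (cons : ∀ u ∈ S, ∀ v ∈ S, h u - h v ≤ d u v) :
    ∃ H : X → ℝ, (∀ z, H z ∈ Set.Icc (0:ℝ) 1) ∧ (∀ u v, |H u - H v| ≤ d u v) ∧
      ∀ s ∈ S, H s = h s := by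
  obtain ⟨dnn, dle1, drefl, dsymm, dtri⟩ := good
  have inner_nonneg : ∀ z, (0:ℝ) ≤ S.inf' hS fun s => h s + d s z := by
    intro z
    obtain ⟨s, hs, hval⟩ := S.exists_mem_eq_inf' hS (fun s => h s + d s z)
    rw [hval]
    exact add_nonneg (box s hs).1 (dnn s z)
  have key : ∀ u v, (S.inf' hS fun s => h s + d s u) - (S.inf' hS fun s => h s + d s v)
      ≤ d u v := by
    intro u v
    obtain ⟨s, hs, hval⟩ := S.exists_mem_eq_inf' hS (fun s => h s + d s v)
    have h1 : (S.inf' hS fun s => h s + d s u) ≤ h s + d s u :=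
      Finset.inf'_le _ hs
    have h2 : d s u ≤ d s v + d v u := dtri s v u
    have h3 : d v u = d u v := dsymm v u
    rw [hval]
    linarith
  refine ⟨fun z => min 1 (S.inf' hS fun s => h s + d s z), ?_, ?_, ?_⟩
  · intro z
    exact ⟨le_min zero_le_one (inner_nonneg z), min_le_left _ _⟩
  · have Hdiff : ∀ u v, min 1 (S.inf' hS fun s => h s + d s u)
        - min 1 (S.inf' hS fun s => h s + d s v) ≤ d u v := by
      intro u v
      rw [min_def, min_def]
      split_ifs <;> linarith [key u v, dnn u v]
    intro u v
    show |min 1 (S.inf' hS fun s => h s + d s u) - min 1 (S.inf' hS fun s => h s + d s v)| ≤ d u v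
    rw [abs_sub_le_iff]
    exact ⟨Hdiff u v, (dsymm v u) ▸ Hdiff v u⟩
  · intro s hs
    show min 1 (S.inf' hS fun s' => h s' + d s' s) = h s
    have h1 : (S.inf' hS fun s' => h s' + d s' s) = h s := by
      apply le_antisymm
      · have := Finset.inf'_le (b := s) (fun s' => h s' + d s' s) hs
        simpa only [drefl s, add_zero] using this
      · apply Finset.le_inf'
        intro s' hs'
        have := cons s hs s' hs'
        have h2 : d s s' = d s' s := dsymm s s'
        linarith
    rw [h1, min_eq_right (box s hs).2]

end Aux

namespace Aux

open Set in
lemma exists_max {X : Type*} (S : Finset X) (d : X → X → ℝ) (c : X → ℝ)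
    (dnn : ∀ u v, 0 ≤ d u v) :
    ∃ h₀ : X → ℝ, (∀ u ∈ S, 0 ≤ h₀ u ∧ h₀ u ≤ 1) ∧
      (∀ u ∈ S, ∀ v ∈ S, h₀ u - h₀ v ≤ d u v) ∧
      ∀ g : X → ℝ, (∀ u ∈ S, 0 ≤ g u ∧ g u ≤ 1) → (∀ u ∈ S, ∀ v ∈ S, g u - g v ≤ d u v) →
        ∑ z ∈ S, c z * g z ≤ ∑ z ∈ S, c z * h₀ z := by
  classical
  set K : Set (X → ℝ) :=
    (Set.pi Set.univ (fun z => if z ∈ S then Set.Icc (0:ℝ) 1 else {0})) ∩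
    {h : X → ℝ | ∀ u ∈ S, ∀ v ∈ S, h u - h v ≤ d u v} with hK
  have hcomp : IsCompact K := by
    apply IsCompact.inter_right
    · exact isCompact_univ_pi fun z => by
        split
        · exact isCompact_Icc
        · exact isCompact_singleton
    · have : {h : X → ℝ | ∀ u ∈ S, ∀ v ∈ S, h u - h v ≤ d u v} =
          ⋂ u ∈ S, ⋂ v ∈ S, {h : X → ℝ | h u - h v ≤ d u v} := by
        ext h; simp [Set.mem_iInter]
      rw [this]
      exact isClosed_biInter fun u _ => isClosed_biInter fun v _ =>
        isClosed_le ((continuous_apply u).sub (continuous_apply v)) continuous_const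
  have hne : K.Nonempty := by
    refine ⟨fun _ => 0, ⟨fun z _ => ?_, fun u _ v _ => by simpa using dnn u v⟩⟩
    show (0:ℝ) ∈ if z ∈ S then Set.Icc (0:ℝ) 1 else {0}
    split
    · exact ⟨le_refl _, zero_le_one⟩
    · rfl
  have hcont : ContinuousOn (fun h : X → ℝ => ∑ z ∈ S, c z * h z) K :=
    (continuous_finset_sum S fun z _ => continuous_const.mul (continuous_apply z)).continuousOn
  obtain ⟨h₀, h₀K, hmax'⟩ := hcomp.exists_isMaxOn hne hcont
  have hmax : ∀ g ∈ K, ∑ z ∈ S, c z * g z ≤ ∑ z ∈ S, c z * h₀ z := fun g hg => hmax' hg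
  have box : ∀ u ∈ S, 0 ≤ h₀ u ∧ h₀ u ≤ 1 := by
    intro u hu
    have := h₀K.1 u (Set.mem_univ u)
    simp only [hu, if_true] at this
    exact Set.mem_Icc.mp this
  refine ⟨h₀, box, h₀K.2, ?_⟩
  intro g gbox gcons
  set g' : X → ℝ := fun z => if z ∈ S then g z else 0 with hg'
  have hg'K : g' ∈ K := by
    constructor
    · intro z _
      show (if z ∈ S then g z else 0) ∈ (if z ∈ S then Set.Icc (0:ℝ) 1 else {0})
      by_cases hz : z ∈ S
      · rw [if_pos hz, if_pos hz]
        exact Set.mem_Icc.mpr (gbox z hz)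
      · rw [if_neg hz, if_neg hz]
        rfl
    · intro u hu v hv
      show (if u ∈ S then g u else 0) - (if v ∈ S then g v else 0) ≤ d u v
      rw [if_pos hu, if_pos hv]
      exact gcons u hu v hv
  calc ∑ z ∈ S, c z * g z = ∑ z ∈ S, c z * g' z :=
        Finset.sum_congr rfl fun z hz => by rw [hg']; simp [hz]
    _ ≤ ∑ z ∈ S, c z * h₀ z := hmax g' hg'K

end Aux

namespace Aux

open Classical in
/-- From a real optimal feasible solution, produce a rational optimal feasible solution. -/
lemma rationalize_aux {X : Type*} (S : Finset X) (d : X → X → ℝ)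
    (dsym : ∀ u v, d u v = d v u) (drat : ∀ u v, ∃ q : ℚ, (q:ℝ) = d u v)
    (c : X → ℝ) (n : ℕ) :
    ∀ h₀ : X → ℝ,
      (S.filter fun u => ¬ ∃ q : ℚ, (q:ℝ) = h₀ u).card ≤ n →
      (∀ u ∈ S, 0 ≤ h₀ u ∧ h₀ u ≤ 1) →
      (∀ u ∈ S, ∀ v ∈ S, h₀ u - h₀ v ≤ d u v) →
      (∀ g : X → ℝ, (∀ u ∈ S, 0 ≤ g u ∧ g u ≤ 1) →
        (∀ u ∈ S, ∀ v ∈ S, g u - g v ≤ d u v) →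
        ∑ z ∈ S, c z * g z ≤ ∑ z ∈ S, c z * h₀ z) →
      ∃ h₁ : X → ℚ, (∀ u ∈ S, 0 ≤ h₁ u ∧ h₁ u ≤ 1) ∧
        (∀ u ∈ S, ∀ v ∈ S, ((h₁ u : ℝ)) - ((h₁ v : ℝ)) ≤ d u v) ∧
        ∑ z ∈ S, c z * ((h₁ z : ℝ)) = ∑ z ∈ S, c z * h₀ z := by
  induction n with
  | zero =>
    intro h₀ hcard box cons _opt
    have hfe : S.filter (fun u => ¬ ∃ q : ℚ, (q:ℝ) = h₀ u) = ∅ :=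
      Finset.card_eq_zero.mp (Nat.le_zero.mp hcard)
    have hrat : ∀ z ∈ S, ∃ q : ℚ, (q:ℝ) = h₀ z := by
      intro z hz
      by_contra hcon
      have : z ∈ S.filter (fun u => ¬ ∃ q : ℚ, (q:ℝ) = h₀ u) :=
        Finset.mem_filter.mpr ⟨hz, hcon⟩
      rw [hfe] at this
      exact absurd this (Finset.notMem_empty z)
    refine ⟨fun z => if hz : z ∈ S then Classical.choose (hrat z hz) else 0, ?_, ?_, ?_⟩
    · intro u hu
      have hval : ((if hz : u ∈ S then Classical.choose (hrat u hz) else 0 : ℚ) : ℝ) = h₀ u := by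
        rw [dif_pos hu]; exact Classical.choose_spec (hrat u hu)
      obtain ⟨h1, h2⟩ := box u hu
      rw [← hval] at h1 h2
      exact ⟨by exact_mod_cast h1, by exact_mod_cast h2⟩
    · intro u hu v hv
      have hvu : ((if hz : u ∈ S then Classical.choose (hrat u hz) else 0 : ℚ) : ℝ) = h₀ u := by
        rw [dif_pos hu]; exact Classical.choose_spec (hrat u hu)
      have hvv : ((if hz : v ∈ S then Classical.choose (hrat v hz) else 0 : ℚ) : ℝ) = h₀ v := by
        rw [dif_pos hv]; exact Classical.choose_spec (hrat v hv)
      rw [hvu, hvv]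
      exact cons u hu v hv
    · refine Finset.sum_congr rfl fun z hz => ?_
      have hval : ((if h : z ∈ S then Classical.choose (hrat z h) else 0 : ℚ) : ℝ) = h₀ z := by
        rw [dif_pos hz]; exact Classical.choose_spec (hrat z hz)
      rw [hval]
  | succ n ih =>
    intro h₀ hcard box cons opt
    by_cases hc : (S.filter fun u => ¬ ∃ q : ℚ, (q:ℝ) = h₀ u).card ≤ n
    · exact ih h₀ hc box cons opt
    -- there is an irrational coordinate u
    have hpos : 0 < (S.filter fun u => ¬ ∃ q : ℚ, (q:ℝ) = h₀ u).card :=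
      lt_of_le_of_lt (Nat.zero_le n) (Nat.lt_of_not_le hc)
    obtain ⟨u, hu_filter⟩ := Finset.card_pos.mp hpos
    have huS : u ∈ S := (Finset.mem_filter.mp hu_filter).1
    have hu_irr : ¬ ∃ q : ℚ, (q:ℝ) = h₀ u := (Finset.mem_filter.mp hu_filter).2
    -- the tight-constraint relation and component of u
    set E : X → X → Prop := fun a b => a ∈ S ∧ b ∈ S ∧
      (h₀ a - h₀ b = d a b ∨ h₀ b - h₀ a = d b a) with hE
    set C : Finset X := S.filter (fun v => Relation.ReflTransGen E u v) with hC
    have memC : ∀ v, v ∈ C ↔ v ∈ S ∧ Relation.ReflTransGen E u v := by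
      intro v; rw [hC]; exact Finset.mem_filter
    have hCsub : C ⊆ S := fun v hv => ((memC v).mp hv).1
    have huC : u ∈ C := (memC u).mpr ⟨huS, Relation.ReflTransGen.refl⟩
    -- rational differences along the component
    have rat_diff : ∀ v, Relation.ReflTransGen E u v → ∃ q : ℚ, (q:ℝ) = h₀ u - h₀ v := by
      intro v hR
      induction hR with
      | refl => exact ⟨0, by simp⟩
      | @tail b c' _hR hEbc ih2 =>
        obtain ⟨q1, hq1⟩ := ih2
        rcases hEbc.2.2 with hbc | hbc
        · obtain ⟨q2, hq2⟩ := drat b c'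
          exact ⟨q1 + q2, by push_cast; rw [hq1, hq2]; linarith [hbc]⟩
        · obtain ⟨q2, hq2⟩ := drat c' b
          exact ⟨q1 - q2, by push_cast; rw [hq1, hq2]; linarith [hbc]⟩
    have irr_C : ∀ v ∈ C, ¬ ∃ q : ℚ, (q:ℝ) = h₀ v := by
      intro v hv ⟨q, hq⟩
      obtain ⟨qd, hqd⟩ := rat_diff v ((memC v).mp hv).2
      exact hu_irr ⟨qd + q, by push_cast; rw [hqd, hq]; ring⟩
    have strict_box : ∀ v ∈ C, 0 < h₀ v ∧ h₀ v < 1 := by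
      intro v hv
      obtain ⟨h1, h2⟩ := box v (hCsub hv)
      constructor
      · rcases lt_or_eq_of_le h1 with h | h
        · exact h
        · exact absurd ⟨0, by rw [← h]; simp⟩ (irr_C v hv)
      · rcases lt_or_eq_of_le h2 with h | h
        · exact h
        · exact absurd ⟨1, by rw [h]; simp⟩ (irr_C v hv)
    have strict_cross : ∀ v ∈ C, ∀ w ∈ S, w ∉ C →
        h₀ v - h₀ w < d v w ∧ h₀ w - h₀ v < d w v := by
      intro v hv w hw hwC
      have hRuv := ((memC v).mp hv).2
      have hne : ¬ E v w := by
        intro hEvw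
        exact hwC ((memC w).mpr ⟨hw, hRuv.tail hEvw⟩)
      constructor
      · rcases lt_or_eq_of_le (cons v (hCsub hv) w hw) with h | h
        · exact h
        · exact absurd ⟨hCsub hv, hw, Or.inl h⟩ hne
      · rcases lt_or_eq_of_le (cons w hw v (hCsub hv)) with h | h
        · exact h
        · exact absurd ⟨hCsub hv, hw, Or.inr h⟩ hne
    -- slack quantities
    set A : Finset ℝ :=
      ((C.image fun v => h₀ v) ∪ (C.image fun v => 1 - h₀ v)) ∪
      (((C ×ˢ (S \ C)).image fun p => d p.1 p.2 - (h₀ p.1 - h₀ p.2)) ∪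
       ((C ×ˢ (S \ C)).image fun p => d p.2 p.1 - (h₀ p.2 - h₀ p.1))) with hA
    have hAne : A.Nonempty := by
      refine ⟨h₀ u, ?_⟩
      rw [hA]
      simp only [Finset.mem_union]
      exact Or.inl (Or.inl (Finset.mem_image_of_mem _ huC))
    obtain ⟨δ, hδ⟩ : ∃ δ : ℝ, δ = A.min' hAne := ⟨_, rfl⟩
    have hδpos : 0 < δ := by
      obtain ⟨m, hmA, hmval⟩ : ∃ m, m ∈ A ∧ m = A.min' hAne := ⟨_, A.min'_mem hAne, rfl⟩
      rw [hA] at hmA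
      simp only [Finset.mem_union, Finset.mem_image, Finset.mem_product,
        Finset.mem_sdiff] at hmA
      rw [hδ, ← hmval]
      rcases hmA with (⟨v, hv, hval⟩ | ⟨v, hv, hval⟩) |
        (⟨p, ⟨hp1, hp2, hp3⟩, hval⟩ | ⟨p, ⟨hp1, hp2, hp3⟩, hval⟩)
      · rw [← hval]; exact (strict_box v hv).1
      · rw [← hval]; linarith [(strict_box v hv).2]
      · rw [← hval]; linarith [(strict_cross p.1 hp1 p.2 hp2 hp3).1]
      · rw [← hval]; linarith [(strict_cross p.1 hp1 p.2 hp2 hp3).2]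
    have dle_box1 : ∀ v ∈ C, δ ≤ h₀ v := by
      intro v hv
      rw [hδ]
      refine A.min'_le _ ?_
      rw [hA]; simp only [Finset.mem_union]
      exact Or.inl (Or.inl (Finset.mem_image_of_mem _ hv))
    have dle_box2 : ∀ v ∈ C, δ ≤ 1 - h₀ v := by
      intro v hv
      rw [hδ]
      refine A.min'_le _ ?_
      rw [hA]; simp only [Finset.mem_union]
      exact Or.inl (Or.inr (Finset.mem_image_of_mem _ hv))
    have dle_cross1 : ∀ v ∈ C, ∀ w ∈ S, w ∉ C → δ ≤ d v w - (h₀ v - h₀ w) := by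
      intro v hv w hw hwC
      rw [hδ]
      refine A.min'_le _ ?_
      rw [hA]; simp only [Finset.mem_union]
      refine Or.inr (Or.inl ?_)
      have hmem2 : (v, w) ∈ C ×ˢ (S \ C) := by
        rw [Finset.mem_product, Finset.mem_sdiff]
        exact ⟨hv, hw, hwC⟩
      exact Finset.mem_image_of_mem _ hmem2
    have dle_cross2 : ∀ v ∈ C, ∀ w ∈ S, w ∉ C → δ ≤ d w v - (h₀ w - h₀ v) := by
      intro v hv w hw hwC
      rw [hδ]
      refine A.min'_le _ ?_
      rw [hA]; simp only [Finset.mem_union]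
      refine Or.inr (Or.inr ?_)
      have hmem2 : (v, w) ∈ C ×ˢ (S \ C) := by
        rw [Finset.mem_product, Finset.mem_sdiff]
        exact ⟨hv, hw, hwC⟩
      exact Finset.mem_image_of_mem _ hmem2
    -- feasibility of shifted functions
    have feas_shift : ∀ t : ℝ, |t| ≤ δ/2 →
        (∀ z ∈ S, 0 ≤ (if z ∈ C then h₀ z + t else h₀ z) ∧
          (if z ∈ C then h₀ z + t else h₀ z) ≤ 1) ∧
        (∀ a ∈ S, ∀ b ∈ S, (if a ∈ C then h₀ a + t else h₀ a) -
          (if b ∈ C then h₀ b + t else h₀ b) ≤ d a b) := by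
      intro t ht
      obtain ⟨ht1, ht2⟩ := abs_le.mp ht
      constructor
      · intro z hz
        by_cases hzC : z ∈ C
        · rw [if_pos hzC]
          exact ⟨by linarith [dle_box1 z hzC], by linarith [dle_box2 z hzC]⟩
        · rw [if_neg hzC]
          exact box z hz
      · intro a ha b hb
        by_cases haC : a ∈ C <;> by_cases hbC : b ∈ C
        · rw [if_pos haC, if_pos hbC]
          linarith [cons a ha b hb]
        · rw [if_pos haC, if_neg hbC]
          linarith [dle_cross1 a haC b hb hbC]
        · rw [if_neg haC, if_pos hbC]
          linarith [dle_cross2 b hbC a ha haC]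
        · rw [if_neg haC, if_neg hbC]
          exact cons a ha b hb
    -- objective of shifted functions
    obtain ⟨σ, hσdef⟩ : ∃ σ : ℝ, σ = ∑ v ∈ C, c v := ⟨_, rfl⟩
    have sum_shift : ∀ t : ℝ, ∑ z ∈ S, c z * (if z ∈ C then h₀ z + t else h₀ z)
        = ∑ z ∈ S, c z * h₀ z + t * σ := by
      intro t
      have e1 : ∀ z ∈ S, c z * (if z ∈ C then h₀ z + t else h₀ z) =
          c z * h₀ z + (if z ∈ C then t * c z else 0) := by
        intro z _
        split_ifs <;> ring
      rw [Finset.sum_congr rfl e1, Finset.sum_add_distrib]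
      congr 1
      have e2 : S.filter (fun z => z ∈ C) = C := by
        ext z
        simp only [Finset.mem_filter]
        exact ⟨fun h => h.2, fun h => ⟨hCsub h, h⟩⟩
      rw [← Finset.sum_filter, e2, ← Finset.mul_sum, hσdef]
    -- the component objective weight vanishes
    have key : ∀ t : ℝ, |t| ≤ δ/2 → t * σ ≤ 0 := by
      intro t ht
      have hfs := feas_shift t ht
      have := opt (fun z => if z ∈ C then h₀ z + t else h₀ z) hfs.1 hfs.2
      rw [sum_shift t] at this
      linarith
    have hσ : σ = 0 := by
      have k1 := key (δ/2) (by rw [abs_of_pos (by linarith)]; )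
      have k2 := key (-(δ/2)) (by rw [abs_neg, abs_of_pos (by linarith)]; )
      nlinarith
    -- rational shift target
    obtain ⟨q', hq1, hq2⟩ := exists_rat_btwn (show h₀ u - δ/2 < h₀ u by linarith)
    have htabs : |(q':ℝ) - h₀ u| ≤ δ/2 := abs_le.mpr ⟨by linarith, by linarith⟩
    obtain ⟨h₀', hh₀'⟩ : ∃ h₀' : X → ℝ,
      h₀' = fun z => if z ∈ C then h₀ z + ((q':ℝ) - h₀ u) else h₀ z := ⟨_, rfl⟩
    have hfs := feas_shift ((q':ℝ) - h₀ u) htabs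
    have box' : ∀ z ∈ S, 0 ≤ h₀' z ∧ h₀' z ≤ 1 := by
      intro z hz; rw [hh₀']; exact hfs.1 z hz
    have cons' : ∀ a ∈ S, ∀ b ∈ S, h₀' a - h₀' b ≤ d a b := by
      intro a ha b hb; rw [hh₀']; exact hfs.2 a ha b hb
    have obj' : ∑ z ∈ S, c z * h₀' z = ∑ z ∈ S, c z * h₀ z := by
      rw [hh₀', sum_shift, hσ]; ring
    have opt' : ∀ g : X → ℝ, (∀ v ∈ S, 0 ≤ g v ∧ g v ≤ 1) →
        (∀ a ∈ S, ∀ b ∈ S, g a - g b ≤ d a b) →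
        ∑ z ∈ S, c z * g z ≤ ∑ z ∈ S, c z * h₀' z := by
      intro g hb hc2
      rw [obj']
      exact opt g hb hc2
    -- the number of irrational coordinates decreased
    have hsub : (S.filter fun z => ¬ ∃ q : ℚ, (q:ℝ) = h₀' z) ⊆
        (S.filter fun z => ¬ ∃ q : ℚ, (q:ℝ) = h₀ z).erase u := by
      intro z hz
      obtain ⟨hzS, hz_irr⟩ := Finset.mem_filter.mp hz
      have hzC : z ∉ C := by
        intro hzC
        obtain ⟨qd, hqd⟩ := rat_diff z ((memC z).mp hzC).2
        refine hz_irr ⟨q' - qd, ?_⟩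
        rw [hh₀']
        show ((q' - qd : ℚ):ℝ) = if z ∈ C then h₀ z + ((q':ℝ) - h₀ u) else h₀ z
        rw [if_pos hzC]
        push_cast
        linarith
      refine Finset.mem_erase.mpr ⟨?_, Finset.mem_filter.mpr ⟨hzS, ?_⟩⟩
      · rintro rfl
        exact hzC huC
      · rintro ⟨q, hq⟩
        refine hz_irr ⟨q, ?_⟩
        rw [hh₀']
        show (q:ℝ) = if z ∈ C then h₀ z + ((q':ℝ) - h₀ u) else h₀ z
        rw [if_neg hzC]
        exact hq
    have hcard' : (S.filter fun z => ¬ ∃ q : ℚ, (q:ℝ) = h₀' z).card ≤ n := by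
      calc (S.filter fun z => ¬ ∃ q : ℚ, (q:ℝ) = h₀' z).card
          ≤ ((S.filter fun z => ¬ ∃ q : ℚ, (q:ℝ) = h₀ z).erase u).card :=
            Finset.card_le_card hsub
        _ = (S.filter fun z => ¬ ∃ q : ℚ, (q:ℝ) = h₀ z).card - 1 :=
            Finset.card_erase_of_mem hu_filter
        _ ≤ (n + 1) - 1 := Nat.sub_le_sub_right hcard 1
        _ = n := rfl
    obtain ⟨h₁, b1, b2, b3⟩ := ih h₀' hcard' box' cons' opt'
    exact ⟨h₁, b1, b2, b3.trans obj'⟩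

lemma rat_sum {X : Type*} (S : Finset X) (f : X → ℝ)
    (hf : ∀ z ∈ S, ∃ q : ℚ, (q:ℝ) = f z) : ∃ q : ℚ, (q:ℝ) = ∑ z ∈ S, f z := by
  classical
  induction S using Finset.induction_on with
  | empty => exact ⟨0, by simp⟩
  | @insert a s ha ih =>
    obtain ⟨qa, hqa⟩ := hf a (Finset.mem_insert_self a s)
    obtain ⟨qs, hqs⟩ := ih fun z hz => hf z (Finset.mem_insert_of_mem hz)
    exact ⟨qa + qs, by rw [Finset.sum_insert ha]; push_cast; rw [hqa, hqs]⟩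

end Aux


/-- Each finite approximant `Γ^i(⊥)(x,y)` is rational and derivable. -/
theorem nstep_derivable {X L : Type*} [DecidableEq X] [Nonempty L] (M : LMC X L)
    (i : ℕ) (x y : X) :
    ∃ q : ℚ, (q : ℝ) = (GammaFun M)^[i] (fun _ _ => 0) x y ∧ Deriv M x q y := by
  induction i generalizing x y with
  | zero => exact ⟨0, by simp, Deriv.zero x y⟩
  | succ n ih =>
    obtain ⟨dnn, dle1, drefl, dsymm, dtri⟩ := Aux.goodD_iterate M n
    rw [Function.iterate_succ_apply']
    set d : X → X → ℝ := (GammaFun M)^[n] (fun _ _ => 0) with hd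
    by_cases hl : M.label x = M.label y
    · -- equal labels: the supremum case
      rw [Aux.gammaFun_def, if_neg (by simp [hl])]
      set S : Finset X := (M.τ x).supp ∪ (M.τ y).supp with hS
      set c : X → ℝ := fun z => (M.τ x).p z - (M.τ y).p z with hc
      have hobj : ∀ h : X → ℝ, expv (M.τ x) h - expv (M.τ y) h = ∑ z ∈ S, c z * h z := by
        intro h
        rw [Aux.expv_eq_sum (M.τ x) S Finset.subset_union_left h,
            Aux.expv_eq_sum (M.τ y) S Finset.subset_union_right h,
            ← Finset.sum_sub_distrib]
        exact Finset.sum_congr rfl fun z _ => by rw [hc]; ring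
      obtain ⟨h₀, box0, cons0, opt0⟩ := Aux.exists_max S d c dnn
      have drat : ∀ u v, ∃ q : ℚ, (q:ℝ) = d u v := fun u v =>
        (ih u v).imp fun q hq => hq.1
      obtain ⟨h₁, box1, cons1, obj1⟩ :=
        Aux.rationalize_aux S d dsymm drat c _ h₀ (le_refl _) box0 cons0 opt0
      obtain ⟨q, hq⟩ : ∃ q : ℚ, (q:ℝ) = ∑ z ∈ S, c z * ((h₁ z : ℚ) : ℝ) := by
        refine Aux.rat_sum S _ fun z _ => ?_
        obtain ⟨qx, hqx⟩ := (M.τ x).rat z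
        obtain ⟨qy, hqy⟩ := (M.τ y).rat z
        exact ⟨(qx - qy) * h₁ z, by push_cast; rw [hqx, hqy, hc]⟩
      have hq0 : (0:ℝ) ≤ (q:ℝ) := by
        rw [hq, obj1]
        have h00 := opt0 (fun _ => 0) (fun u _ => ⟨le_refl _, zero_le_one⟩)
          (fun u _ v _ => by simpa using dnn u v)
        simpa using h00
      have hSne : S.Nonempty := (Aux.supp_nonempty (M.τ x)).mono Finset.subset_union_left
      obtain ⟨H, Hbox, Hlip, Hagree⟩ := Aux.mcshane S hSne
        ⟨dnn, dle1, drefl, dsymm, dtri⟩ (fun z => ((h₁ z : ℚ) : ℝ))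
        (fun s hs => by
          obtain ⟨a, b⟩ := box1 s hs
          constructor
          · show (0:ℝ) ≤ ((h₁ s : ℚ) : ℝ)
            exact_mod_cast a
          · show ((h₁ s : ℚ) : ℝ) ≤ 1
            exact_mod_cast b)
        cons1
      have hmem : (q:ℝ) ∈ Aux.gset M d x y := by
        refine ⟨H, Hbox, Hlip, ?_⟩
        have e : ∑ z ∈ S, c z * H z = ∑ z ∈ S, c z * ((h₁ z : ℚ) : ℝ) :=
          Finset.sum_congr rfl fun z hz => by rw [Hagree z hz]
        rw [hobj H, e]
        exact hq
      have hub : ∀ r ∈ Aux.gset M d x y, r ≤ (q:ℝ) := by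
        rintro r ⟨h, hbox, hlip, rfl⟩
        rw [hobj h]
        have hb : ∀ u ∈ S, 0 ≤ h u ∧ h u ≤ 1 := fun u _ => ⟨(hbox u).1, (hbox u).2⟩
        have hcns : ∀ u ∈ S, ∀ v ∈ S, h u - h v ≤ d u v := fun u _ v _ =>
          le_trans (le_abs_self _) (hlip u v)
        calc ∑ z ∈ S, c z * h z ≤ ∑ z ∈ S, c z * h₀ z := opt0 h hb hcns
          _ = ∑ z ∈ S, c z * ((h₁ z : ℚ) : ℝ) := obj1.symm
          _ = (q:ℝ) := hq.symm
      have hsup : sSup (Aux.gset M d x y) = (q:ℝ) :=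
        le_antisymm (csSup_le ⟨_, hmem⟩ hub) (le_csSup ⟨(q:ℝ), hub⟩ hmem)
      refine ⟨q, hsup.symm, ?_⟩
      refine Deriv.exp h₁ (by exact_mod_cast hq0) ?_ ?_ ?_
      · exact box1
      · intro x' hx' y' hy' hlt
        obtain ⟨q', hq', D⟩ := ih x' y'
        have hle : h₁ x' - h₁ y' ≤ q' := by
          have hcc := cons1 x' hx' y' hy'
          rw [← hq'] at hcc
          exact_mod_cast hcc
        exact Deriv.weak D (by linarith) hle
      · rw [hobj]
        exact le_of_eq hq
    · refine ⟨1, ?_, Deriv.lab x y hl⟩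
      rw [Aux.gammaFun_def, if_pos hl]
      norm_num
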